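/- Let 0 < γ < 2, 0 < r ≤ ∞, and let M : ℕ → ℝ be a sequence of positive reals with M_0 = 1, M increasing and logarithmically convex. If f ∈ A_M(S_{γ,r}) is flat (f^{(j)}(z) → 0 as z → 0 in S_{γ,r} for every j ∈ ℕ), then there exist positive constants c_1 and c_2 such that |f(z)| ≤ c_1·h_M(c_2·|z|) for all z ∈ S_{γ,r}. -/

import Mathlib

open Set Filter Topology Complex ENNReal

noncomputable section

/-- The sector `S_{γ,r}` of the complex plane: `0 < |z| < r`, `|arg z| < γπ/2`. -/
def Sector (γ : ℝ) (r : ℝ≥0∞) : Set ℂ :=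
  {z : ℂ | z ≠ 0 ∧ |Complex.arg z| < γ * Real.pi / 2 ∧ (‖z‖₊ : ℝ≥0∞) < r}

/-- `f ∈ A^∞(S_{γ,r})`: `f` is holomorphic on the sector and all its derivatives
are bounded there. -/
def AInfty (γ : ℝ) (r : ℝ≥0∞) (f : ℂ → ℂ) : Prop :=
  DifferentiableOn ℂ f (Sector γ r) ∧
  ∀ j : ℕ, ∃ B : ℝ, ∀ z ∈ Sector γ r, ‖iteratedDeriv j f z‖ ≤ B

/-- `f ∈ A_M(S_{γ,r})`: `f ∈ A^∞(S_{γ,r})` with Denjoy–Carleman bounds. -/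
def AClass (M : ℕ → ℝ) (γ : ℝ) (r : ℝ≥0∞) (f : ℂ → ℂ) : Prop :=
  AInfty γ r f ∧
  ∃ C > (0:ℝ), ∃ σ > (0:ℝ), ∀ (j : ℕ), ∀ z ∈ Sector γ r,
    ‖iteratedDeriv j f z‖ ≤ C * σ ^ j * (Nat.factorial j : ℝ) * M j

/-- `f` is flat on `S_{γ,r}`: every derivative tends to `0` at the vertex. -/
def FlatOn (γ : ℝ) (r : ℝ≥0∞) (f : ℂ → ℂ) : Prop :=
  ∀ j : ℕ, Tendsto (iteratedDeriv j f) (𝓝[Sector γ r] 0) (𝓝 0)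

/-- The function `h_M` associated with the sequence `M`. -/
def hFun (M : ℕ → ℝ) (t : ℝ) : ℝ := if t = 0 then 0 else ⨅ j : ℕ, t ^ j * M j

lemma sector_isOpen {γ : ℝ} {r : ℝ≥0∞} (hγ2 : γ < 2) : IsOpen (Sector γ r) := by
  rw [isOpen_iff_mem_nhds]
  rintro z ⟨hz0, harg, hnorm⟩
  have hπ : 0 < Real.pi := Real.pi_pos
  have hslit : z ∈ Complex.slitPlane := by
    rw [Complex.mem_slitPlane_iff_arg]
    refine ⟨fun h => ?_, hz0⟩
    rw [h, abs_of_pos hπ] at harg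
    nlinarith
  have h1 : {w : ℂ | w ≠ 0} ∈ 𝓝 z := isOpen_ne.mem_nhds hz0
  have h2 : {w : ℂ | |Complex.arg w| < γ * Real.pi / 2} ∈ 𝓝 z := by
    have hc : ContinuousAt (fun w : ℂ => |Complex.arg w|) z :=
      (Complex.continuousAt_arg hslit).abs
    exact hc.eventually_lt_const harg
  have h3 : {w : ℂ | (‖w‖₊ : ℝ≥0∞) < r} ∈ 𝓝 z := by
    have hc : Continuous (fun w : ℂ => (‖w‖₊ : ℝ≥0∞)) :=
      ENNReal.continuous_coe.comp continuous_nnnorm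
    exact (hc.isOpen_preimage _ isOpen_Iio).mem_nhds hnorm
  filter_upwards [h1, h2, h3] with w hw1 hw2 hw3
  exact ⟨hw1, hw2, hw3⟩

lemma sector_smul {γ : ℝ} {r : ℝ≥0∞} {t : ℝ} (ht0 : 0 < t) (ht1 : t ≤ 1) {z : ℂ}
    (hz : z ∈ Sector γ r) : (t : ℂ) * z ∈ Sector γ r := by
  obtain ⟨hz0, harg, hnorm⟩ := hz
  refine ⟨mul_ne_zero (by exact_mod_cast ht0.ne') hz0, ?_, ?_⟩
  · rwa [Complex.arg_real_mul z ht0]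
  · refine lt_of_le_of_lt ?_ hnorm
    rw [ENNReal.coe_le_coe]
    have : ‖(t : ℂ) * z‖ ≤ ‖z‖ := by
      rw [norm_mul, Complex.norm_real, Real.norm_of_nonneg ht0.le]
      nlinarith [norm_nonneg z]
    exact this
  -- done

lemma iter_analytic {γ : ℝ} {r : ℝ≥0∞} {f : ℂ → ℂ} (hγ2 : γ < 2)
    (hd : DifferentiableOn ℂ f (Sector γ r)) (k : ℕ) :
    AnalyticOnNhd ℂ (iteratedDeriv k f) (Sector γ r) := by
  induction k with
  | zero => rw [iteratedDeriv_zero]; exact hd.analyticOnNhd (sector_isOpen hγ2)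
  | succ k ih => rw [iteratedDeriv_succ]; exact ih.deriv

lemma iter_hasDerivAt {γ : ℝ} {r : ℝ≥0∞} {f : ℂ → ℂ} (hγ2 : γ < 2)
    (hd : DifferentiableOn ℂ f (Sector γ r)) (k : ℕ) {z : ℂ} (hz : z ∈ Sector γ r) :
    HasDerivAt (iteratedDeriv k f) (iteratedDeriv (k + 1) f z) z := by
  have h := ((iter_analytic hγ2 hd k) z hz).differentiableAt.hasDerivAt
  rwa [← iteratedDeriv_succ] at h

/-- Key downward induction: a bound on the `j`-th derivative propagates, by integration
along rays and flatness, to a bound with a factor `|z|^m / m!` for lower derivatives. -/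
lemma main_bound {γ : ℝ} {r : ℝ≥0∞} {f : ℂ → ℂ} {M : ℕ → ℝ} {C σ : ℝ}
    (hγ2 : γ < 2) (hC : 0 < C) (hσ : 0 < σ) (hMpos : ∀ j, 0 < M j)
    (hd : DifferentiableOn ℂ f (Sector γ r))
    (hb : ∀ (j : ℕ), ∀ z ∈ Sector γ r,
      ‖iteratedDeriv j f z‖ ≤ C * σ ^ j * (Nat.factorial j : ℝ) * M j)
    (hflat : FlatOn γ r f) (j : ℕ) :
    ∀ m ≤ j, ∀ z ∈ Sector γ r, ‖iteratedDeriv (j - m) f z‖ ≤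
      C * σ ^ j * (Nat.factorial j : ℝ) * M j * ‖z‖ ^ m /
        (Nat.factorial m : ℝ) := by
  intro m
  induction m with
  | zero =>
    intro _ z hz
    simpa using hb j z hz
  | succ m ih =>
    intro hm z hz
    have hm' : m ≤ j := by omega
    have hkey : j - m = (j - (m + 1)) + 1 := by omega
    set k := j - (m + 1) with hk
    set D : ℝ := C * σ ^ j * (Nat.factorial j : ℝ) * M j / (Nat.factorial m : ℝ) with hD
    have hDpos : 0 < D := by
      have := hMpos j
      have h1 : (0:ℝ) < (Nat.factorial j : ℝ) := by positivity
      have h2 : (0:ℝ) < (Nat.factorial m : ℝ) := by positivity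
      positivity
    have IH : ∀ w ∈ Sector γ r,
        ‖iteratedDeriv (k + 1) f w‖ ≤ D * ‖w‖ ^ m := by
      intro w hw
      have := ih hm' w hw
      rw [hkey] at this
      rw [hD]
      calc ‖iteratedDeriv (k + 1) f w‖
          ≤ C * σ ^ j * (Nat.factorial j : ℝ) * M j * ‖w‖ ^ m /
            (Nat.factorial m : ℝ) := this
        _ = C * σ ^ j * (Nat.factorial j : ℝ) * M j / (Nat.factorial m : ℝ) *
            ‖w‖ ^ m := by ring
    set g : ℂ → ℂ := iteratedDeriv k f with hg
    set A : ℝ := D * ‖z‖ ^ (m + 1) / (m + 1) with hA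
    have hAnn : 0 ≤ A := by positivity
    -- derivative of t ↦ g (t z)
    have hder : ∀ t : ℝ, 0 < t → t ≤ 1 →
        HasDerivAt (fun s : ℝ => g ((s : ℂ) * z))
          (iteratedDeriv (k + 1) f ((t : ℂ) * z) * z) t := by
      intro t ht0 ht1
      have hmem : (t : ℂ) * z ∈ Sector γ r := sector_smul ht0 ht1 hz
      have h1 : HasDerivAt g (iteratedDeriv (k + 1) f ((t : ℂ) * z)) ((t : ℂ) * z) :=
        iter_hasDerivAt hγ2 hd k hmem
      have h2 : HasDerivAt (fun u : ℂ => u * z) z (t : ℂ) := hasDerivAt_mul_const z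
      have h3 : HasDerivAt (fun u : ℂ => g (u * z))
          (iteratedDeriv (k + 1) f ((t : ℂ) * z) * z) (t : ℂ) := by have := HasDerivAt.comp (t : ℂ) h1 h2; exact this
      exact h3.comp_ofReal
    -- for every ε ∈ (0,1), ‖g z‖ ≤ A + ‖g (ε z)‖
    have hstep : ∀ ε : ℝ, 0 < ε → ε < 1 → ‖g z‖ ≤ A + ‖g ((ε : ℂ) * z)‖ := by
      intro ε hε0 hε1
      set φ : ℝ → ℂ := fun s : ℝ => g ((s : ℂ) * z) with hφ
      set B : ℝ → ℝ := fun t => A * t ^ (m + 1) + ‖φ ε‖ with hB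
      have hB' : ∀ x : ℝ, HasDerivAt B (D * ‖z‖ ^ (m + 1) * x ^ m) x := by
        intro x
        have h1 : HasDerivAt (fun t : ℝ => A * t ^ (m + 1))
            (A * (((m : ℝ) + 1) * x ^ m)) x := by
          have := (hasDerivAt_pow (m + 1) x)
          have h := this.const_mul A
          simpa using h
        have h2 := h1.add_const ‖φ ε‖
        have heq : A * (((m : ℝ) + 1) * x ^ m) = D * ‖z‖ ^ (m + 1) * x ^ m := by
          rw [hA]
          have : ((m : ℝ) + 1) ≠ 0 := by positivity
          field_simp
        rw [heq] at h2
        exact h2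
      have hcont : ContinuousOn φ (Icc ε 1) := by
        intro t ht
        exact ((hder t (lt_of_lt_of_le hε0 ht.1) ht.2).continuousAt).continuousWithinAt
      have hderiv : ∀ x ∈ Ico ε 1, HasDerivWithinAt φ
          (iteratedDeriv (k + 1) f ((x : ℂ) * z) * z) (Ici x) x := by
        intro x hx
        exact (hder x (lt_of_lt_of_le hε0 hx.1) hx.2.le).hasDerivWithinAt
      have hbound : ∀ x ∈ Ico ε 1,
          ‖iteratedDeriv (k + 1) f ((x : ℂ) * z) * z‖ ≤
            D * ‖z‖ ^ (m + 1) * x ^ m := by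
        intro x hx
        have hx0 : 0 < x := lt_of_lt_of_le hε0 hx.1
        have hmem : (x : ℂ) * z ∈ Sector γ r := sector_smul hx0 hx.2.le hz
        have h1 := IH _ hmem
        have habs : ‖(x : ℂ) * z‖ = x * ‖z‖ := by
          rw [norm_mul, Complex.norm_real, Real.norm_of_nonneg hx0.le]
        rw [norm_mul]
        calc ‖iteratedDeriv (k + 1) f ((x : ℂ) * z)‖ * ‖z‖
            ≤ D * ‖(x : ℂ) * z‖ ^ m * ‖z‖ := by
              apply mul_le_mul_of_nonneg_right h1 (norm_nonneg z)
          _ = D * ‖z‖ ^ (m + 1) * x ^ m := by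
              rw [habs, mul_pow]
              ring
      have hBa : ‖φ ε‖ ≤ B ε := by
        show ‖φ ε‖ ≤ A * ε ^ (m + 1) + ‖φ ε‖
        have : 0 ≤ A * ε ^ (m + 1) := by positivity
        linarith
      have := image_norm_le_of_norm_deriv_right_le_deriv_boundary hcont hderiv hBa hB' hbound
        (right_mem_Icc.2 hε1.le)
      have hφ1 : φ 1 = g z := by simp [hφ]
      rw [hφ1, hB] at this
      simpa using this
    -- take ε → 0⁺
    have hA_fin : ‖g z‖ ≤ A := by
      have htend : Tendsto (fun ε : ℝ => (ε : ℂ) * z) (𝓝[>] (0:ℝ)) (𝓝[Sector γ r] 0) := by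
        rw [tendsto_nhdsWithin_iff]
        constructor
        · have : Tendsto (fun ε : ℝ => (ε : ℂ) * z) (𝓝 (0:ℝ)) (𝓝 ((0:ℂ) * z)) :=
            (Complex.continuous_ofReal.tendsto 0).mul_const z
          simpa using this.mono_left nhdsWithin_le_nhds
        · filter_upwards [Ioo_mem_nhdsGT (zero_lt_one (α := ℝ))] with ε hε
          exact sector_smul hε.1 hε.2.le hz
      have hlim : Tendsto (fun ε : ℝ => A + ‖g ((ε : ℂ) * z)‖) (𝓝[>] (0:ℝ)) (𝓝 (A + 0)) := by
        apply Tendsto.const_add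
        have := (hflat k).comp htend
        simpa using this.norm
      have hev : ∀ᶠ ε : ℝ in 𝓝[>] (0:ℝ), ‖g z‖ ≤ A + ‖g ((ε : ℂ) * z)‖ := by
        filter_upwards [Ioo_mem_nhdsGT (zero_lt_one (α := ℝ))] with ε hε
        exact hstep ε hε.1 hε.2
      have := ge_of_tendsto hlim hev
      simpa using this
    -- convert A to the required form
    show ‖g z‖ ≤ _
    calc ‖g z‖ ≤ A := hA_fin
      _ = C * σ ^ j * (Nat.factorial j : ℝ) * M j * ‖z‖ ^ (m + 1) /
          (Nat.factorial (m + 1) : ℝ) := by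
          rw [hA, hD]
          have h1 : (Nat.factorial m : ℝ) ≠ 0 := by positivity
          have h2 : ((m : ℝ) + 1) ≠ 0 := by positivity
          have h3 : (Nat.factorial (m + 1) : ℝ) = ((m : ℝ) + 1) * (Nat.factorial m : ℝ) := by
            rw [Nat.factorial_succ]; push_cast; ring
          rw [h3]
          rw [div_mul_eq_mul_div, div_div]
          ring_nf

/-- A flat function of `A_M(S_{γ,r})` satisfies `|f(z)| ≤ c₁·h_M(c₂·|z|)`. -/
theorem flat_bound_of_AClass
    (γ : ℝ) (hγ0 : 0 < γ) (hγ2 : γ < 2) (r : ℝ≥0∞) (hr : 0 < r)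
    (M : ℕ → ℝ) (hpos : ∀ j, 0 < M j) (hM0 : M 0 = 1) (hmono : Monotone M)
    (hlc : ∀ j : ℕ, (M (j+1))^2 ≤ M j * M (j+2))
    (f : ℂ → ℂ) (hf : AClass M γ r f) (hflat : FlatOn γ r f) :
    ∃ c₁ > (0:ℝ), ∃ c₂ > (0:ℝ), ∀ z ∈ Sector γ r,
      ‖f z‖ ≤ c₁ * hFun M (c₂ * ‖z‖) := by
  obtain ⟨⟨hd, _⟩, C, hC, σ, hσ, hb⟩ := hf
  refine ⟨C, hC, σ, hσ, fun z hz => ?_⟩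
  have habs : 0 < ‖z‖ := norm_pos_iff.mpr hz.1
  have ht : σ * ‖z‖ ≠ 0 := by positivity
  rw [hFun, if_neg ht]
  have hfz : ∀ j : ℕ, ‖f z‖ ≤ C * ((σ * ‖z‖) ^ j * M j) := by
    intro j
    have h := main_bound hγ2 hC hσ hpos hd hb hflat j j le_rfl z hz
    rw [Nat.sub_self, iteratedDeriv_zero] at h
    have hfac : (Nat.factorial j : ℝ) ≠ 0 := by positivity
    calc ‖f z‖ ≤ C * σ ^ j * (Nat.factorial j : ℝ) * M j * ‖z‖ ^ j /
          (Nat.factorial j : ℝ) := h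
      _ = C * ((σ * ‖z‖) ^ j * M j) := by
          rw [mul_pow]; field_simp
  have hinf : ‖f z‖ / C ≤ ⨅ j : ℕ, (σ * ‖z‖) ^ j * M j := by
    apply le_ciInf
    intro j
    rw [div_le_iff₀ hC]
    calc ‖f z‖ ≤ C * ((σ * ‖z‖) ^ j * M j) := hfz j
      _ = (σ * ‖z‖) ^ j * M j * C := by ring
  calc ‖f z‖ = ‖f z‖ / C * C := by field_simp
    _ ≤ (⨅ j : ℕ, (σ * ‖z‖) ^ j * M j) * C :=
        mul_le_mul_of_nonneg_right hinf hC.le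
    _ = C * ⨅ j : ℕ, (σ * ‖z‖) ^ j * M j := by ring
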